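/- For any k ≥ 1 and any finite collection of c ≥ 1 affine hyperplanes H₁, …, H_c in ℝ^k, the complement ℝ^k \ (H₁ ∪ ⋯ ∪ H_c) has at most (c+1)^k connected components. -/

import Mathlib

open Module

private lemma seg_pos {x y t : ℝ} (hx : 0 < x) (hy : 0 < y) (h0 : 0 < t) (h1 : t < 1) :
    0 < (1 - t) * x + t * y := by nlinarith

private lemma seg_neg {x y t : ℝ} (hx : x < 0) (hy : y < 0) (h0 : 0 < t) (h1 : t < 1) :
    (1 - t) * x + t * y < 0 := by nlinarith

private lemma crossing {m d : ℕ} (f : Fin (m + 1) → ((Fin d → ℝ) →ᵃ[ℝ] ℝ))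
    (zn zp : Fin d → ℝ)
    (hzn : ∀ i, f i zn ≠ 0) (hzp : ∀ i, f i zp ≠ 0)
    (hn : f (Fin.last m) zn < 0) (hp : 0 < f (Fin.last m) zp)
    (hsame : ∀ i : Fin m, decide (0 < f i.castSucc zn) = decide (0 < f i.castSucc zp)) :
    ∃ z, (∀ i : Fin m, f i.castSucc z ≠ 0) ∧ f (Fin.last m) z = 0 ∧
      ∀ i : Fin m, decide (0 < f i.castSucc z) = decide (0 < f i.castSucc zn) := by
  set A := f (Fin.last m) zn with hA
  set B := f (Fin.last m) zp with hB
  have hAB : A - B < 0 := by linarith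
  set t : ℝ := A / (A - B) with ht
  have ht0 : 0 < t := div_pos_of_neg_of_neg hn hAB
  have ht1 : t < 1 := by
    rw [ht, div_lt_one_of_neg hAB]
    linarith
  refine ⟨AffineMap.lineMap zn zp t, ?_, ?_, ?_⟩
  · intro i
    rw [AffineMap.apply_lineMap, AffineMap.lineMap_apply_module, smul_eq_mul, smul_eq_mul]
    by_cases hx : 0 < f i.castSucc zn
    · have hy : 0 < f i.castSucc zp :=
        (decide_eq_decide.mp (hsame i)).mp hx
      exact ne_of_gt (seg_pos hx hy ht0 ht1)
    · have hx' : f i.castSucc zn < 0 := lt_of_le_of_ne (not_lt.mp hx) (hzn i.castSucc)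
      have hy : f i.castSucc zp < 0 := by
        have := (decide_eq_decide.mp (hsame i)).not.mp hx
        exact lt_of_le_of_ne (not_lt.mp this) (hzp i.castSucc)
      exact ne_of_lt (seg_neg hx' hy ht0 ht1)
  · rw [AffineMap.apply_lineMap, AffineMap.lineMap_apply_module, smul_eq_mul, smul_eq_mul,
      ← hA, ← hB, ht]
    have : A - B ≠ 0 := ne_of_lt hAB
    field_simp
    ring
  · intro i
    rw [AffineMap.apply_lineMap, AffineMap.lineMap_apply_module, smul_eq_mul, smul_eq_mul]
    rw [decide_eq_decide]
    by_cases hx : 0 < f i.castSucc zn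
    · have hy : 0 < f i.castSucc zp := (decide_eq_decide.mp (hsame i)).mp hx
      exact ⟨fun _ => hx, fun _ => seg_pos hx hy ht0 ht1⟩
    · have hx' : f i.castSucc zn < 0 := lt_of_le_of_ne (not_lt.mp hx) (hzn i.castSucc)
      have hy : f i.castSucc zp < 0 := by
        have := (decide_eq_decide.mp (hsame i)).not.mp hx
        exact lt_of_le_of_ne (not_lt.mp this) (hzp i.castSucc)
      have := seg_neg hx' hy ht0 ht1
      exact ⟨fun h => absurd h (not_lt.mpr (le_of_lt this)), fun h => absurd h hx⟩

lemma sign_pattern_bound (m : ℕ) : ∀ (d : ℕ) (f : Fin m → ((Fin d → ℝ) →ᵃ[ℝ] ℝ)),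
    ((fun z (i : Fin m) => decide (0 < f i z)) '' {z | ∀ i, f i z ≠ 0}).ncard ≤ (m + 1) ^ d := by
  induction m with
  | zero =>
    intro d f
    have h1 : ((fun z (i : Fin 0) => decide (0 < f i z)) '' {z | ∀ i, f i z ≠ 0}).ncard
        ≤ (Set.univ : Set (Fin 0 → Bool)).ncard :=
      Set.ncard_le_ncard (Set.subset_univ _) Set.finite_univ
    simpa [Set.ncard_univ] using h1
  | succ m IH =>
    intro d f
    set Pat : (Fin d → ℝ) → (Fin (m + 1) → Bool) := fun z i => decide (0 < f i z) with hPat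
    set U : Set (Fin d → ℝ) := {z | ∀ i, f i z ≠ 0} with hU
    set patm : (Fin d → ℝ) → (Fin m → Bool) := fun z i => decide (0 < f i.castSucc z) with hpatm
    set Um : Set (Fin d → ℝ) := {z | ∀ i : Fin m, f i.castSucc z ≠ 0} with hUm
    have hUUm : U ⊆ Um := fun z hz i => hz _
    have hSm : (patm '' Um).ncard ≤ (m + 1) ^ d := IH d (fun i => f i.castSucc)
    set res : (Fin (m + 1) → Bool) → (Fin m → Bool) := fun ε i => ε i.castSucc with hres
    by_cases hl : (f (Fin.last m)).linear = 0
    · -- last functional is constant; res is injective on the pattern set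
      have hconst : ∀ z, f (Fin.last m) z = f (Fin.last m) 0 := by
        intro z
        have h := (f (Fin.last m)).map_vadd (0 : Fin d → ℝ) z
        simpa [hl] using h
      have hinj : Set.InjOn res (Pat '' U) := by
        rintro ε1 ⟨z1, hz1, rfl⟩ ε2 ⟨z2, hz2, rfl⟩ h
        funext i
        refine Fin.lastCases ?_ (fun j => ?_) i
        · show decide (0 < f (Fin.last m) z1) = decide (0 < f (Fin.last m) z2)
          rw [hconst z1, hconst z2]
        · exact congrFun h j
      calc (Pat '' U).ncard = (res '' (Pat '' U)).ncard := (Set.ncard_image_of_injOn hinj).symm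
        _ ≤ (patm '' Um).ncard := by
            apply Set.ncard_le_ncard _ (Set.toFinite _)
            rintro ε ⟨ε', ⟨z, hz, rfl⟩, rfl⟩
            exact ⟨z, hUUm hz, rfl⟩
        _ ≤ (m + 1) ^ d := hSm
        _ ≤ (m + 1 + 1) ^ d := Nat.pow_le_pow_left (by omega) d
    · -- last functional nonconstant
      obtain ⟨v, hv⟩ : ∃ v, (f (Fin.last m)).linear v ≠ 0 := by
        by_contra h
        push_neg at h
        exact hl (LinearMap.ext h)
      have hd : d ≠ 0 := by
        rintro rfl
        exact hv (by rw [Subsingleton.elim v 0, map_zero])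
      set L : (Fin d → ℝ) →ₗ[ℝ] ℝ := (f (Fin.last m)).linear with hL
      set z0 : Fin d → ℝ := (-(f (Fin.last m) 0 / L v)) • v with hz0
      have hfz0 : f (Fin.last m) z0 = 0 := by
        have h1 : f (Fin.last m) (z0 +ᵥ (0 : Fin d → ℝ)) = L z0 +ᵥ f (Fin.last m) 0 :=
          (f (Fin.last m)).map_vadd _ _
        have h2 : L z0 = -(f (Fin.last m) 0) := by
          rw [hz0, map_smul, smul_eq_mul]
          field_simp
        simpa [h2] using h1
      set K := LinearMap.ker L with hK
      have hmemK : ∀ z, f (Fin.last m) z = 0 → z - z0 ∈ K := by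
        intro z hz
        have h1 : f (Fin.last m) ((z - z0) +ᵥ z0) = L (z - z0) +ᵥ f (Fin.last m) z0 :=
          (f (Fin.last m)).map_vadd _ _
        have h2 : (z - z0) +ᵥ z0 = z := by
          simp only [vadd_eq_add, sub_add_cancel]
        rw [h2, hz, hfz0] at h1
        simp only [vadd_eq_add, add_zero] at h1
        exact LinearMap.mem_ker.mpr h1.symm
      have hrank : finrank ℝ K = d - 1 := by
        have h1 := LinearMap.finrank_range_add_finrank_ker L
        have h2 : LinearMap.range L = ⊤ := by
          rw [LinearMap.range_eq_top]
          intro x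
          exact ⟨(x / L v) • v, by rw [map_smul, smul_eq_mul]; field_simp⟩
        rw [h2] at h1
        have h3 : finrank ℝ (⊤ : Submodule ℝ ℝ) = 1 := by
          rw [finrank_top, finrank_self]
        rw [h3, finrank_pi] at h1
        simp only [Fintype.card_fin] at h1
        have h1' : 1 + finrank ℝ K = d := by rw [hK]; exact h1
        omega
      set b := Module.finBasis ℝ K with hb
      set ψ : (Fin (finrank ℝ K) → ℝ) →ₗ[ℝ] (Fin d → ℝ) :=
        K.subtype.comp (b.equivFun.symm : _ ≃ₗ[ℝ] _).toLinearMap with hψ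
      set φ : (Fin (finrank ℝ K) → ℝ) →ᵃ[ℝ] (Fin d → ℝ) :=
        { toFun := fun y => z0 + ψ y
          linear := ψ
          map_vadd' := by
            intro p v'
            simp only [vadd_eq_add, map_add]
            abel } with hφ
      set g : Fin m → ((Fin (finrank ℝ K) → ℝ) →ᵃ[ℝ] ℝ) := fun i =>
        (f i.castSucc).comp φ with hg
      have hgy : ∀ i y, g i y = f i.castSucc (z0 + ψ y) := fun i y => rfl
      have hsurj : ∀ z, f (Fin.last m) z = 0 → ∃ y, z0 + ψ y = z := by
        intro z hz
        refine ⟨b.equivFun ⟨z - z0, hmemK z hz⟩, ?_⟩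
        have hpsi : ψ (b.equivFun ⟨z - z0, hmemK z hz⟩) = z - z0 := by
          simp only [hψ, LinearMap.comp_apply, LinearEquiv.coe_coe,
            LinearEquiv.symm_apply_apply, Submodule.coe_subtype]
        rw [hpsi]
        abel
      set SH := patm '' (Um ∩ {z | f (Fin.last m) z = 0}) with hSH
      have hSHcard : SH.ncard ≤ (m + 1) ^ (d - 1) := by
        have hsub : SH ⊆ (fun y (i : Fin m) => decide (0 < g i y)) '' {y | ∀ i, g i y ≠ 0} := by
          rintro ε ⟨z, ⟨hzU, hz0'⟩, rfl⟩
          obtain ⟨y, hy⟩ := hsurj z hz0'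
          refine ⟨y, fun i => by rw [hgy, hy]; exact hzU i, ?_⟩
          funext i
          simp only [hpatm]
          rw [hgy, hy]
        calc SH.ncard ≤ _ := Set.ncard_le_ncard hsub (Set.toFinite _)
          _ ≤ (m + 1) ^ (finrank ℝ K) := IH _ g
          _ = (m + 1) ^ (d - 1) := by rw [hrank]
      -- split by last coordinate
      set St := (Pat '' U) ∩ {ε | ε (Fin.last m) = true} with hSt
      set Sf := (Pat '' U) ∩ {ε | ε (Fin.last m) = false} with hSf
      have hsplit : Pat '' U = St ∪ Sf := by
        ext ε
        simp only [hSt, hSf, Set.mem_union, Set.mem_inter_iff, Set.mem_setOf_eq]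
        constructor
        · intro h
          rcases Bool.eq_false_or_eq_true (ε (Fin.last m)) with h' | h'
          · exact Or.inl ⟨h, h'⟩
          · exact Or.inr ⟨h, h'⟩
        · rintro (⟨h, _⟩ | ⟨h, _⟩) <;> exact h
      have hdisj : Disjoint St Sf := by
        rw [Set.disjoint_left]
        rintro ε ⟨_, h1⟩ ⟨_, h2⟩
        simp only [Set.mem_setOf_eq] at h1 h2
        rw [h1] at h2
        exact absurd h2 (by simp)
      have hinjt : Set.InjOn res St := by
        rintro ε1 ⟨_, h1⟩ ε2 ⟨_, h2⟩ h
        funext i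
        refine Fin.lastCases ?_ (fun j => ?_) i
        · simp only [Set.mem_setOf_eq] at h1 h2
          rw [h1, h2]
        · exact congrFun h j
      have hinjf : Set.InjOn res Sf := by
        rintro ε1 ⟨_, h1⟩ ε2 ⟨_, h2⟩ h
        funext i
        refine Fin.lastCases ?_ (fun j => ?_) i
        · simp only [Set.mem_setOf_eq] at h1 h2
          rw [h1, h2]
        · exact congrFun h j
      have hsubt : res '' St ⊆ patm '' Um := by
        rintro ε ⟨ε', ⟨⟨z, hz, rfl⟩, _⟩, rfl⟩
        exact ⟨z, hUUm hz, rfl⟩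
      have hsubf : res '' Sf ⊆ patm '' Um := by
        rintro ε ⟨ε', ⟨⟨z, hz, rfl⟩, _⟩, rfl⟩
        exact ⟨z, hUUm hz, rfl⟩
      have hinter : res '' St ∩ res '' Sf ⊆ SH := by
        rintro ε ⟨⟨ε1, ⟨⟨zp, hzp, rfl⟩, hlp⟩, rfl⟩, ⟨ε2, ⟨⟨zn, hzn, rfl⟩, hln⟩, h21⟩⟩
        simp only [Set.mem_setOf_eq, hPat] at hlp hln
        have hp : 0 < f (Fin.last m) zp := of_decide_eq_true hlp
        have hn : f (Fin.last m) zn < 0 := by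
          have h1 : ¬ (0 < f (Fin.last m) zn) := of_decide_eq_false hln
          exact lt_of_le_of_ne (not_lt.mp h1) (hzn (Fin.last m))
        have hsame : ∀ i : Fin m, decide (0 < f i.castSucc zn) = decide (0 < f i.castSucc zp) :=
          fun i => congrFun h21 i
        obtain ⟨zs, hzs1, hzs2, hzs3⟩ := crossing f zn zp hzn hzp hn hp hsame
        refine ⟨zs, ⟨hzs1, hzs2⟩, ?_⟩
        funext i
        exact (hzs3 i).trans (hsame i)
      -- counting
      have hcount := Set.ncard_union_add_ncard_inter (res '' St) (res '' Sf)
        (Set.toFinite _) (Set.toFinite _)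
      have hSum : (Pat '' U).ncard = St.ncard + Sf.ncard := by
        rw [hsplit]
        exact Set.ncard_union_eq hdisj (Set.toFinite _) (Set.toFinite _)
      have h1 : St.ncard = (res '' St).ncard := (Set.ncard_image_of_injOn hinjt).symm
      have h2 : Sf.ncard = (res '' Sf).ncard := (Set.ncard_image_of_injOn hinjf).symm
      have h3 : (res '' St ∪ res '' Sf).ncard ≤ (patm '' Um).ncard :=
        Set.ncard_le_ncard (Set.union_subset hsubt hsubf) (Set.toFinite _)
      have h4 : (res '' St ∩ res '' Sf).ncard ≤ SH.ncard :=
        Set.ncard_le_ncard hinter (Set.toFinite _)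
      obtain ⟨d', rfl⟩ : ∃ d', d = d' + 1 := ⟨d - 1, by omega⟩
      have hfinal : (m + 1) ^ (d' + 1) + (m + 1) ^ d' ≤ (m + 2) ^ (d' + 1) := by
        have he : (m + 1) ^ (d' + 1) + (m + 1) ^ d' = (m + 1) ^ d' * (m + 2) := by ring
        rw [he, pow_succ]
        exact Nat.mul_le_mul (Nat.pow_le_pow_left (by omega) d') (le_refl _)
      have hdd : d' + 1 - 1 = d' := rfl
      rw [hdd] at hSHcard
      calc (Pat '' U).ncard = (res '' St).ncard + (res '' Sf).ncard := by rw [hSum, h1, h2]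
        _ = (res '' St ∪ res '' Sf).ncard + (res '' St ∩ res '' Sf).ncard := hcount.symm
        _ ≤ (m + 1) ^ (d' + 1) + (m + 1) ^ d' := by omega
        _ ≤ (m + 2) ^ (d' + 1) := hfinal

/-- **Hyperplane arrangements** (used in Lemma 2.2 of the paper). `c ≥ 1` affine hyperplanes
in `ℝ^k` (`k ≥ 1`) split `ℝ^k` into at most `(c+1)^k` regions: the complement of their union
has finitely many connected components, and at most `(c+1)^k` of them. -/
theorem hyperplane_complement_components
    (k c : ℕ) (hk : 1 ≤ k) (hc : 1 ≤ c)
    (w : Fin c → Fin k → ℝ) (s : Fin c → ℝ) (hw : ∀ i, w i ≠ 0) :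
    (({T : Set (Fin k → ℝ) |
        ∃ z ∈ {z : Fin k → ℝ | ∀ i, ∑ j, w i j * z j ≠ s i},
          T = connectedComponentIn {z : Fin k → ℝ | ∀ i, ∑ j, w i j * z j ≠ s i} z}).Finite) ∧
    ({T : Set (Fin k → ℝ) |
        ∃ z ∈ {z : Fin k → ℝ | ∀ i, ∑ j, w i j * z j ≠ s i},
          T = connectedComponentIn {z : Fin k → ℝ | ∀ i, ∑ j, w i j * z j ≠ s i} z}).ncard
      ≤ (c + 1) ^ k := by
  classical
  -- the affine functionals
  set f : Fin c → ((Fin k → ℝ) →ᵃ[ℝ] ℝ) := fun i =>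
    { toFun := fun z => (∑ j, w i j * z j) - s i
      linear := ∑ j, w i j • LinearMap.proj j
      map_vadd' := by
        intro p v
        simp only [vadd_eq_add, Pi.add_apply, LinearMap.sum_apply, LinearMap.smul_apply,
          LinearMap.proj_apply, smul_eq_mul, mul_add, Finset.sum_add_distrib]
        ring } with hf
  have hfz : ∀ i z, f i z = (∑ j, w i j * z j) - s i := fun i z => rfl
  set U : Set (Fin k → ℝ) := {z : Fin k → ℝ | ∀ i, ∑ j, w i j * z j ≠ s i} with hUdef
  have hUf : U = {z | ∀ i, f i z ≠ 0} := by
    ext z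
    simp only [hUdef, Set.mem_setOf_eq, hfz, sub_ne_zero]
  set P : (Fin k → ℝ) → (Fin c → Bool) := fun z i => decide (0 < f i z) with hP
  -- same pattern implies same component
  have hsame : ∀ z1 ∈ U, ∀ z2 ∈ U, P z1 = P z2 →
      connectedComponentIn U z1 = connectedComponentIn U z2 := by
    intro z1 hz1 z2 hz2 hPeq
    set Cell : Set (Fin k → ℝ) :=
      ⋂ i, (f i) ⁻¹' (if 0 < f i z1 then Set.Ioi 0 else Set.Iio 0) with hCell
    have hconv : Convex ℝ Cell := by
      apply convex_iInter
      intro i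
      apply Convex.affine_preimage
      split_ifs
      · exact convex_Ioi 0
      · exact convex_Iio 0
    have hCellU : Cell ⊆ U := by
      intro x hx
      rw [hUf]
      intro i
      have := Set.mem_iInter.mp hx i
      split_ifs at this with h
      · exact ne_of_gt this
      · exact ne_of_lt this
    have hz1' : ∀ i, f i z1 ≠ 0 := by rw [hUf] at hz1; exact hz1
    have hz2' : ∀ i, f i z2 ≠ 0 := by rw [hUf] at hz2; exact hz2
    have hz1c : z1 ∈ Cell := by
      apply Set.mem_iInter.mpr
      intro i
      split_ifs with h
      · exact h
      · exact lt_of_le_of_ne (not_lt.mp h) (hz1' i)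
    have hz2c : z2 ∈ Cell := by
      apply Set.mem_iInter.mpr
      intro i
      have hiff : (0 < f i z2) ↔ (0 < f i z1) :=
        (decide_eq_decide.mp (congrFun hPeq i)).symm
      split_ifs with h
      · exact hiff.mpr h
      · exact lt_of_le_of_ne (not_lt.mp fun h' => h (hiff.mp h')) (hz2' i)
    have hsub : Cell ⊆ connectedComponentIn U z1 :=
      (hconv.isPreconnected).subset_connectedComponentIn hz1c hCellU
    exact connectedComponentIn_eq (hsub hz2c)
  -- factor the component map through patterns
  set G : (Fin c → Bool) → Set (Fin k → ℝ) := fun ε =>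
    if h : ∃ z, z ∈ U ∧ P z = ε then connectedComponentIn U h.choose else ∅ with hG
  have hGP : ∀ z ∈ U, G (P z) = connectedComponentIn U z := by
    intro z hz
    have h : ∃ z', z' ∈ U ∧ P z' = P z := ⟨z, hz, rfl⟩
    rw [hG]
    simp only [dif_pos h]
    exact hsame _ h.choose_spec.1 _ hz h.choose_spec.2
  have hComp : {T : Set (Fin k → ℝ) | ∃ z ∈ U, T = connectedComponentIn U z}
      = G '' (P '' U) := by
    ext T
    constructor
    · rintro ⟨z, hz, rfl⟩
      exact ⟨P z, ⟨z, hz, rfl⟩, hGP z hz⟩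
    · rintro ⟨ε, ⟨z, hz, rfl⟩, rfl⟩
      exact ⟨z, hz, hGP z hz⟩
  constructor
  · rw [hComp]
    exact ((P '' U).toFinite).image G
  · rw [hComp]
    calc (G '' (P '' U)).ncard ≤ (P '' U).ncard :=
          Set.ncard_image_le (Set.toFinite _)
      _ ≤ (c + 1) ^ k := by
          rw [hP, hUf]
          exact sign_pattern_bound c k f
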